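/- arXiv:1305.5767 — 4 statements merged into one kernel-verified Lean document; each statement's English description precedes it below -/
import Mathlib

section
/- With χ and S = χ^{-1}χ^T as in the dP_5 K-theory setup, the fixed space of S^2 (the 1-eigenspace of S^2) has dimension exactly 6. -/
open Matrix
set_option maxHeartbeats 1600000
lemma cv3_2 {α : Type*} (x : α) (u : Fin 2 → α) : Matrix.vecCons x u (2 : Fin 3) = u 1 := rfl
lemma cv4_2 {α : Type*} (x : α) (u : Fin 3 → α) : Matrix.vecCons x u (2 : Fin 4) = u 1 := rfl
lemma cv4_3 {α : Type*} (x : α) (u : Fin 3 → α) : Matrix.vecCons x u (3 : Fin 4) = u 2 := rfl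
lemma cv5_2 {α : Type*} (x : α) (u : Fin 4 → α) : Matrix.vecCons x u (2 : Fin 5) = u 1 := rfl
lemma cv5_3 {α : Type*} (x : α) (u : Fin 4 → α) : Matrix.vecCons x u (3 : Fin 5) = u 2 := rfl
lemma cv5_4 {α : Type*} (x : α) (u : Fin 4 → α) : Matrix.vecCons x u (4 : Fin 5) = u 3 := rfl
lemma cv6_2 {α : Type*} (x : α) (u : Fin 5 → α) : Matrix.vecCons x u (2 : Fin 6) = u 1 := rfl
lemma cv6_3 {α : Type*} (x : α) (u : Fin 5 → α) : Matrix.vecCons x u (3 : Fin 6) = u 2 := rfl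
lemma cv6_4 {α : Type*} (x : α) (u : Fin 5 → α) : Matrix.vecCons x u (4 : Fin 6) = u 3 := rfl
lemma cv6_5 {α : Type*} (x : α) (u : Fin 5 → α) : Matrix.vecCons x u (5 : Fin 6) = u 4 := rfl
lemma cv7_2 {α : Type*} (x : α) (u : Fin 6 → α) : Matrix.vecCons x u (2 : Fin 7) = u 1 := rfl
lemma cv7_3 {α : Type*} (x : α) (u : Fin 6 → α) : Matrix.vecCons x u (3 : Fin 7) = u 2 := rfl
lemma cv7_4 {α : Type*} (x : α) (u : Fin 6 → α) : Matrix.vecCons x u (4 : Fin 7) = u 3 := rfl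
lemma cv7_5 {α : Type*} (x : α) (u : Fin 6 → α) : Matrix.vecCons x u (5 : Fin 7) = u 4 := rfl
lemma cv7_6 {α : Type*} (x : α) (u : Fin 6 → α) : Matrix.vecCons x u (6 : Fin 7) = u 5 := rfl

/-- For the dP_5 Serre operator `S = χ⁻¹ χᵀ` on `ℚ^7`, the fixed space of `S²`
(the 1-eigenspace of `S²`) has dimension exactly 6. -/
theorem stmt7 (χ S : Matrix (Fin 7) (Fin 7) ℚ)
    (hχ : χ = !![1,0,0,0,0,-1,-1;
                 0,1,0,0,0,-1,-1;
                 0,0,1,0,0,-1,-1;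
                 0,0,0,1,0,-1,-1;
                 0,0,0,0,1,-1,-1;
                 0,0,0,0,0,1,3;
                 0,0,0,0,0,0,1])
    (hS : S = χ⁻¹ * χᵀ) :
    Module.finrank ℚ (LinearMap.ker (Matrix.toLin' (S ^ 2 - 1))) = 6 := by
  have hinv : χ⁻¹ = !![1,0,0,0,0,1,-2;
                       0,1,0,0,0,1,-2;
                       0,0,1,0,0,1,-2;
                       0,0,0,1,0,1,-2;
                       0,0,0,0,1,1,-2;
                       0,0,0,0,0,1,-3;
                       0,0,0,0,0,0,1] := by
    apply Matrix.inv_eq_right_inv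
    rw [hχ]
    ext i j
    fin_cases i <;> fin_cases j <;>
      simp [Matrix.mul_apply, Fin.sum_univ_succ, Matrix.one_apply,
        cv7_2,cv7_3,cv7_4,cv7_5,cv7_6,cv6_2,cv6_3,cv6_4,cv6_5,
        cv5_2,cv5_3,cv5_4,cv4_2,cv4_3,cv3_2, Matrix.vecHead, Matrix.vecTail] <;> norm_num
  have hχT : χᵀ = !![1,0,0,0,0,0,0;
                     0,1,0,0,0,0,0;
                     0,0,1,0,0,0,0;
                     0,0,0,1,0,0,0;
                     0,0,0,0,1,0,0;
                     -1,-1,-1,-1,-1,1,0;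
                     -1,-1,-1,-1,-1,3,1] := by
    rw [hχ]
    ext i j
    fin_cases i <;> fin_cases j <;>
      simp [Matrix.transpose_apply,
        cv7_2,cv7_3,cv7_4,cv7_5,cv7_6,cv6_2,cv6_3,cv6_4,cv6_5,
        cv5_2,cv5_3,cv5_4,cv4_2,cv4_3,cv3_2, Matrix.vecHead, Matrix.vecTail]
  set M : Matrix (Fin 7) (Fin 7) ℚ :=
    !![-1,-1,-1,-1,-1,4,1;
       -1,-1,-1,-1,-1,4,1;
       -1,-1,-1,-1,-1,4,1;
       -1,-1,-1,-1,-1,4,1;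
       -1,-1,-1,-1,-1,4,1;
       -1,-1,-1,-1,-1,4,1;
       -1,-1,-1,-1,-1,4,1] with hM
  have hSval : S = !![2,1,1,1,1,-5,-2;
                      1,2,1,1,1,-5,-2;
                      1,1,2,1,1,-5,-2;
                      1,1,1,2,1,-5,-2;
                      1,1,1,1,2,-5,-2;
                      2,2,2,2,2,-8,-3;
                      -1,-1,-1,-1,-1,3,1] := by
    rw [hS, hinv, hχT]
    ext i j
    fin_cases i <;> fin_cases j <;>
      simp [Matrix.mul_apply, Fin.sum_univ_succ,
        cv7_2,cv7_3,cv7_4,cv7_5,cv7_6,cv6_2,cv6_3,cv6_4,cv6_5,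
        cv5_2,cv5_3,cv5_4,cv4_2,cv4_3,cv3_2, Matrix.vecHead, Matrix.vecTail] <;> norm_num
  have hS2 : S ^ 2 - 1 = M := by
    rw [hSval, hM, pow_two]
    ext i j
    rw [Matrix.sub_apply]
    fin_cases i <;> fin_cases j <;>
      simp [Matrix.mul_apply, Fin.sum_univ_succ, Matrix.one_apply,
        cv7_2,cv7_3,cv7_4,cv7_5,cv7_6,cv6_2,cv6_3,cv6_4,cv6_5,
        cv5_2,cv5_3,cv5_4,cv4_2,cv4_3,cv3_2, Matrix.vecHead, Matrix.vecTail] <;> norm_num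
  rw [hS2]
  have hrn := LinearMap.finrank_range_add_finrank_ker (Matrix.toLin' M)
  have hdim : Module.finrank ℚ (Fin 7 → ℚ) = 7 := by
    simp [Module.finrank_fintype_fun_eq_card]
  rw [hdim] at hrn
  have hrange : Module.finrank ℚ (LinearMap.range (Matrix.toLin' M)) = M.rank := by
    rw [Matrix.rank, Matrix.toLin'_apply']
  have hfact : M = (!![1;1;1;1;1;1;1] : Matrix (Fin 7) (Fin 1) ℚ) *
      (!![-1,-1,-1,-1,-1,4,1] : Matrix (Fin 1) (Fin 7) ℚ) := by
    rw [hM]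
    ext i j
    fin_cases i <;> fin_cases j <;>
      simp [Matrix.mul_apply, Fin.sum_univ_one,
        cv7_2,cv7_3,cv7_4,cv7_5,cv7_6,cv6_2,cv6_3,cv6_4,cv6_5,
        cv5_2,cv5_3,cv5_4,cv4_2,cv4_3,cv3_2, Matrix.vecHead, Matrix.vecTail]
  have hle : M.rank ≤ 1 := by
    rw [hfact]
    calc Matrix.rank _ ≤ Matrix.rank (!![1;1;1;1;1;1;1] :
          Matrix (Fin 7) (Fin 1) ℚ) := Matrix.rank_mul_le_left _ _
      _ ≤ Fintype.card (Fin 1) := Matrix.rank_le_card_width _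
      _ = 1 := by simp
  have hne : M.rank ≠ 0 := by
    intro h0
    rw [← hrange] at h0
    have hz : (Matrix.toLin' M) ![1,0,0,0,0,0,0] = 0 := by
      have hbot : LinearMap.range (Matrix.toLin' M) = ⊥ :=
        Submodule.finrank_eq_zero.mp h0
      have hmem := LinearMap.mem_range_self (Matrix.toLin' M) ![1,0,0,0,0,0,0]
      rw [hbot] at hmem
      simpa using hmem
    have h1 := congrFun hz 0
    rw [hM] at h1
    simp [Matrix.toLin'_apply, Matrix.mulVec, dotProduct,
      Fin.sum_univ_succ,
      cv7_2,cv7_3,cv7_4,cv7_5,cv7_6,cv6_2,cv6_3,cv6_4,cv6_5,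
      cv5_2,cv5_3,cv5_4,cv4_2,cv4_3,cv3_2, Matrix.vecHead, Matrix.vecTail] at h1
  have h1 : M.rank = 1 := le_antisymm hle (Nat.one_le_iff_ne_zero.mpr hne)
  rw [hrange, h1] at hrn
  omega
end

section
/- For the matrix S_6 = χ_6^{-1} χ_6^T associated to dP_6 (an 8×8 matrix), S_6^3 = I, and the 1-eigenspace of S_6 is 6-dimensional. -/
open Matrix

private def χz : Matrix (Fin 8) (Fin 8) ℤ :=
  Matrix.of fun i j =>
    if i = j then 1
    else if i.val < 6 ∧ (j.val = 6 ∨ j.val = 7) then -1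
    else if i.val = 6 ∧ j.val = 7 then 3
    else 0

private def χzinv : Matrix (Fin 8) (Fin 8) ℤ :=
  !![1,0,0,0,0,0,1,-2; 0,1,0,0,0,0,1,-2; 0,0,1,0,0,0,1,-2; 0,0,0,1,0,0,1,-2;
     0,0,0,0,1,0,1,-2; 0,0,0,0,0,1,1,-2; 0,0,0,0,0,0,1,-3; 0,0,0,0,0,0,0,1]

private def Sz : Matrix (Fin 8) (Fin 8) ℤ :=
  !![2,1,1,1,1,1,-5,-2; 1,2,1,1,1,1,-5,-2; 1,1,2,1,1,1,-5,-2; 1,1,1,2,1,1,-5,-2;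
     1,1,1,1,2,1,-5,-2; 1,1,1,1,1,2,-5,-2; 2,2,2,2,2,2,-8,-3; -1,-1,-1,-1,-1,-1,3,1]

private def Qz : Matrix (Fin 8) (Fin 8) ℤ := Sz * Sz + Sz + 1

private noncomputable def mc : Matrix (Fin 8) (Fin 8) ℤ →+* Matrix (Fin 8) (Fin 8) ℚ :=
  (Int.castRingHom ℚ).mapMatrix

/-- For the dP_6 Serre operator `S_6 = χ_6⁻¹ χ_6ᵀ` (an 8×8 matrix), `S_6³ = I`
and the 1-eigenspace of `S_6` is 6-dimensional. -/
theorem stmt10 (χ S : Matrix (Fin 8) (Fin 8) ℚ)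
    (hχ : χ = Matrix.of fun i j =>
      if i = j then 1
      else if i.val < 6 ∧ (j.val = 6 ∨ j.val = 7) then -1
      else if i.val = 6 ∧ j.val = 7 then 3
      else 0)
    (hS : S = χ⁻¹ * χᵀ) :
    S ^ 3 = 1 ∧ Module.finrank ℚ (LinearMap.ker (Matrix.toLin' (S - 1))) = 6 := by
  -- identify χ with the cast of the integer matrix χz
  have hχm : χ = mc χz := by
    rw [hχ]; ext i j
    simp only [mc, RingHom.mapMatrix_apply, Matrix.map_apply, Matrix.of_apply, χz,
      apply_ite (Int.cast : ℤ → ℚ)]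
    norm_num
  have hzinv : χz * χzinv = 1 := by decide
  have hzS : χzinv * χzᵀ = Sz := by decide
  have hinv : χ⁻¹ = mc χzinv := by
    apply Matrix.inv_eq_right_inv
    rw [hχm, ← _root_.map_mul, hzinv, _root_.map_one]
  have hSm : S = mc Sz := by
    rw [hS, hinv, hχm, ← hzS, _root_.map_mul]
    congr 1
  subst hSm
  constructor
  · have h3 : Sz ^ 3 = 1 := by decide
    rw [← _root_.map_pow, h3, _root_.map_one]
  · set P : Matrix (Fin 8) (Fin 8) ℚ := (1/3 : ℚ) • (mc Qz) with hP
    have hSQ : (Sz - 1) * Qz = 0 := by decide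
    have hSP : (mc Sz - 1) * P = 0 := by
      rw [hP, Matrix.mul_smul, ← _root_.map_one mc, ← _root_.map_sub, ← _root_.map_mul, hSQ, _root_.map_zero, smul_zero]
    have hproj : LinearMap.IsProj (LinearMap.ker (Matrix.toLin' (mc Sz - 1)))
        (Matrix.toLin' P) := by
      constructor
      · intro x
        simp only [LinearMap.mem_ker, Matrix.toLin'_apply]
        rw [Matrix.mulVec_mulVec, hSP, Matrix.zero_mulVec]
      · intro x hx
        simp only [LinearMap.mem_ker, Matrix.toLin'_apply] at hx
        have hx' : mc Sz *ᵥ x = x := by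
          rw [Matrix.sub_mulVec, Matrix.one_mulVec, sub_eq_zero] at hx
          exact hx
        have hQ : mc Qz = mc Sz * mc Sz + mc Sz + 1 := by
          rw [Qz, _root_.map_add, _root_.map_add, _root_.map_mul, _root_.map_one]
        simp only [Matrix.toLin'_apply, hP, Matrix.smul_mulVec, hQ,
          Matrix.add_mulVec, Matrix.one_mulVec, ← Matrix.mulVec_mulVec, hx']
        funext i
        simp only [Pi.smul_apply, Pi.add_apply, smul_eq_mul]
        ring
    have htr := hproj.trace
    have htr' : LinearMap.trace ℚ (Fin 8 → ℚ) (Matrix.toLin' P) = Matrix.trace P := by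
      rw [LinearMap.trace_eq_matrix_trace ℚ (Pi.basisFun ℚ (Fin 8)),
        LinearMap.toMatrix_eq_toMatrix', LinearMap.toMatrix'_toLin']
    have htrQ : Matrix.trace Qz = 18 := by decide
    have htrP : Matrix.trace P = 6 := by
      rw [hP, Matrix.trace_smul]
      have : Matrix.trace (mc Qz) = ((Matrix.trace Qz : ℤ) : ℚ) := by
        simp [mc, RingHom.mapMatrix_apply, Matrix.trace, Matrix.map_apply]
      rw [this, htrQ]
      norm_num
    rw [htr', htrP] at htr
    exact_mod_cast htr.symm
end

section
/- For the matrix S_7 = χ_7^{-1} χ_7^T associated to dP_7 (9×9), S_7^4 = I but S_7^2 ≠ I; indeed S_7^2 has both 1 and −1 as eigenvalues. -/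
open Matrix

private def chiM : Matrix (Fin 9) (Fin 9) ℚ :=
  Matrix.of fun i j =>
    if i = j then 1
    else if i.val < 7 ∧ (j.val = 7 ∨ j.val = 8) then -1
    else if i.val = 7 ∧ j.val = 8 then 3
    else 0

private def Bm : Matrix (Fin 9) (Fin 9) ℚ :=
  Matrix.of fun i j =>
    if i = j then 1
    else if i.val ≤ 7 ∧ j.val = 7 then 1
    else if i.val < 7 ∧ j.val = 8 then -2
    else if i.val = 7 ∧ j.val = 8 then -3
    else 0

private def Sm : Matrix (Fin 9) (Fin 9) ℚ :=
  Matrix.of fun i j =>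
    if i.val < 7 then
      (if j = i then 2 else if j.val = 7 then -5 else if j.val = 8 then -2 else 1)
    else if i.val = 7 then
      (if j.val = 7 then -8 else if j.val = 8 then -3 else 2)
    else
      (if j.val = 7 then 3 else if j.val = 8 then 1 else -1)

private def S2m : Matrix (Fin 9) (Fin 9) ℚ :=
  Matrix.of fun i j =>
    if i.val < 7 then
      (if j = i then 2 else if j.val = 7 then -6 else if j.val = 8 then -3 else 1)
    else if i.val = 7 then
      (if j.val = 7 then -15 else if j.val = 8 then -7 else 3)
    else
      (if j.val = 7 then 14 else if j.val = 8 then 6 else -3)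

set_option maxHeartbeats 2000000

private lemma hB : chiM * Bm = 1 := by
  ext i j
  fin_cases i <;> fin_cases j <;>
    simp (config := { decide := true })
      [Matrix.mul_apply, Fin.sum_univ_succ, chiM, Bm, Matrix.one_apply] <;> norm_num

private lemma hS : Bm * chiMᵀ = Sm := by
  ext i j
  fin_cases i <;> fin_cases j <;>
    simp (config := { decide := true })
      [Matrix.mul_apply, Fin.sum_univ_succ, chiM, Bm, Sm, Matrix.transpose_apply] <;> norm_num

private lemma hS2 : Sm * Sm = S2m := by
  ext i j
  fin_cases i <;> fin_cases j <;>
    simp (config := { decide := true })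
      [Matrix.mul_apply, Fin.sum_univ_succ, Sm, S2m] <;> norm_num

private lemma hS4 : S2m * S2m = 1 := by
  ext i j
  fin_cases i <;> fin_cases j <;>
    simp (config := { decide := true })
      [Matrix.mul_apply, Fin.sum_univ_succ, S2m, Matrix.one_apply] <;> norm_num

private lemma hne1 : S2m ≠ 1 := by
  intro h
  have := congrFun (congrFun h 0) 1
  simp [S2m, Matrix.one_apply] at this

private lemma hneneg1 : S2m ≠ -1 := by
  intro h
  have := congrFun (congrFun h 0) 0
  simp [S2m, Matrix.one_apply] at this
  norm_num at this

/-- For the dP_7 Serre operator `S_7 = χ_7⁻¹ χ_7ᵀ` (a 9×9 matrix), `S_7⁴ = I` but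
`S_7² ≠ I`; indeed `S_7²` has both `1` and `-1` as eigenvalues, i.e.
`det(S_7² + I) = 0` and `det(S_7² - I) = 0`. -/
theorem stmt11 :
    let χ : Matrix (Fin 9) (Fin 9) ℚ :=
      Matrix.of fun i j =>
        if i = j then 1
        else if i.val < 7 ∧ (j.val = 7 ∨ j.val = 8) then -1
        else if i.val = 7 ∧ j.val = 8 then 3
        else 0
    let S := χ⁻¹ * χᵀ
    S ^ 4 = 1 ∧ S ^ 2 ≠ 1 ∧ (S ^ 2 + 1).det = 0 ∧ (S ^ 2 - 1).det = 0 := by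
  intro χ S
  have hχ : χ = chiM := rfl
  have hinv : χ⁻¹ = Bm := by rw [hχ]; exact Matrix.inv_eq_right_inv hB
  have hSeq : S = Sm := by
    show χ⁻¹ * χᵀ = Sm
    rw [hinv, hχ, hS]
  have hsq : S ^ 2 = S2m := by rw [hSeq, sq, hS2]
  have h4 : S ^ 4 = 1 := by
    have : S ^ 4 = S ^ 2 * S ^ 2 := by rw [← pow_add]
    rw [this, hsq, hS4]
  refine ⟨h4, ?_, ?_, ?_⟩
  · rw [hsq]; exact hne1
  · -- det (S^2 + 1) = 0
    by_contra hdet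
    have hu : IsUnit (S ^ 2 + 1).det := isUnit_iff_ne_zero.mpr hdet
    have hmul : (S ^ 2 - 1) * (S ^ 2 + 1) = 0 := by
      have : (S ^ 2 - 1) * (S ^ 2 + 1) = S ^ 4 - 1 := by
        have h42 : S ^ 4 = S ^ 2 * S ^ 2 := by rw [← pow_add]
        rw [h42]; noncomm_ring
      rw [this, h4, sub_self]
    have := congrArg (fun M => M * (S ^ 2 + 1)⁻¹) hmul
    simp only [Matrix.mul_assoc, Matrix.mul_nonsing_inv _ hu, Matrix.mul_one,
      Matrix.zero_mul] at this
    have h1 : S ^ 2 = 1 := sub_eq_zero.mp this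
    rw [hsq] at h1
    exact hne1 h1
  · -- det (S^2 - 1) = 0
    by_contra hdet
    have hu : IsUnit (S ^ 2 - 1).det := isUnit_iff_ne_zero.mpr hdet
    have hmul : (S ^ 2 + 1) * (S ^ 2 - 1) = 0 := by
      have : (S ^ 2 + 1) * (S ^ 2 - 1) = S ^ 4 - 1 := by
        have h42 : S ^ 4 = S ^ 2 * S ^ 2 := by rw [← pow_add]
        rw [h42]; noncomm_ring
      rw [this, h4, sub_self]
    have := congrArg (fun M => M * (S ^ 2 - 1)⁻¹) hmul
    simp only [Matrix.mul_assoc, Matrix.mul_nonsing_inv _ hu, Matrix.mul_one,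
      Matrix.zero_mul] at this
    have h0 : S ^ 2 = -1 := by rwa [add_eq_zero_iff_eq_neg] at this
    rw [hsq] at h0
    exact hneneg1 h0
end

section
/- For 1 ≤ n ≤ 4, the matrix S_n = χ_n^{-1} χ_n^T has two distinct negative real eigenvalues λ_± satisfying λ_+ λ_- = 1, λ_+ + λ_- = −(7−n), with λ_- < −1 < λ_+ < 0; in particular no power of S_n equals ±I. -/
open Matrix

lemma chi_det_one (n : ℕ) :
    (Matrix.of fun i j : Fin (n + 2) =>
      if i = j then (1 : ℝ)
      else if i.val < n ∧ (j.val = n ∨ j.val = n + 1) then -1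
      else if i.val = n ∧ j.val = n + 1 then 3
      else 0).det = 1 := by
  rw [Matrix.det_of_upperTriangular]
  · simp
  · intro i j hij
    simp only [id_eq] at hij
    have hij' : j.val < i.val := hij
    have h1 : i.val < n + 2 := i.isLt
    simp only [Matrix.of_apply]
    rw [if_neg, if_neg, if_neg]
    · rintro ⟨h, h'⟩; omega
    · rintro ⟨h, h' | h'⟩ <;> omega
    · intro h; rw [h] at hij'; omega

lemma no_power_aux {m : Type*} [Fintype m] [DecidableEq m] (S : Matrix m m ℝ) (l : ℝ)
    (hl : 1 < |l|) (hd : (S - l • 1).det = 0) :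
    ∀ q : ℕ, 1 ≤ q → S ^ q ≠ 1 ∧ S ^ q ≠ -1 := by
  obtain ⟨v, hv, hSv⟩ := Matrix.exists_mulVec_eq_zero_iff.2 hd
  rw [Matrix.sub_mulVec, Matrix.smul_mulVec, Matrix.one_mulVec, sub_eq_zero] at hSv
  have key : ∀ q : ℕ, S ^ q *ᵥ v = l ^ q • v := by
    intro q
    induction q with
    | zero => simp
    | succ k ih =>
      rw [pow_succ, pow_succ, ← Matrix.mulVec_mulVec, hSv, Matrix.mulVec_smul, ih,
        smul_smul, mul_comm]
  obtain ⟨i, hi⟩ := Function.ne_iff.1 hv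
  have hvi : v i ≠ 0 := by simpa using hi
  have habs : ∀ q : ℕ, 1 ≤ q → 1 < |l ^ q| := by
    intro q hq
    rw [abs_pow]
    exact one_lt_pow₀ hl (by omega)
  intro q hq
  have hgt := habs q hq
  constructor <;> intro hEq
  · have h := key q
    rw [hEq, Matrix.one_mulVec] at h
    have h2 : v i = l ^ q * v i := by
      have := congrFun h i; simpa [Pi.smul_apply] using this
    have hlq : l ^ q = 1 := by
      have : (l ^ q - 1) * v i = 0 := by nlinarith [h2]
      rcases mul_eq_zero.1 this with h' | h'
      · linarith
      · exact absurd h' hvi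
    rw [hlq] at hgt; simp at hgt
  · have h := key q
    rw [hEq, Matrix.neg_mulVec, Matrix.one_mulVec] at h
    have h2 : -v i = l ^ q * v i := by
      have := congrFun h i; simpa [Pi.smul_apply] using this
    have hlq : l ^ q = -1 := by
      have : (l ^ q + 1) * v i = 0 := by nlinarith [h2]
      rcases mul_eq_zero.1 this with h' | h'
      · linarith
      · exact absurd h' hvi
    rw [hlq] at hgt; simp at hgt

lemma main_aux {m : Type*} [Fintype m] [DecidableEq m] (χ : Matrix m m ℝ)
    (hχ : χ.det = 1) (c : ℝ) (hc : 2 < c)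
    (hker : ∀ l : ℝ, l ^ 2 + c * l + 1 = 0 → (χᵀ - l • χ).det = 0) :
    ∃ lp lm : ℝ, lp * lm = 1 ∧ lp + lm = -c ∧
      lm < -1 ∧ -1 < lp ∧ lp < 0 ∧
      ((χ⁻¹ * χᵀ) - lp • 1).det = 0 ∧ ((χ⁻¹ * χᵀ) - lm • 1).det = 0 ∧
      ∀ q : ℕ, 1 ≤ q → (χ⁻¹ * χᵀ) ^ q ≠ 1 ∧ (χ⁻¹ * χᵀ) ^ q ≠ -1 := by
  have hu : IsUnit χ.det := by rw [hχ]; exact isUnit_one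
  have hdetS : ∀ l : ℝ, l ^ 2 + c * l + 1 = 0 → ((χ⁻¹ * χᵀ) - l • 1).det = 0 := by
    intro l hq
    have h1 : (χ⁻¹ * χᵀ) - l • 1 = χ⁻¹ * (χᵀ - l • χ) := by
      rw [Matrix.mul_sub, Matrix.mul_smul, Matrix.nonsing_inv_mul χ hu]
    rw [h1, Matrix.det_mul, hker l hq, mul_zero]
  set s := Real.sqrt (c ^ 2 - 4) with hs
  have hD : 0 ≤ c ^ 2 - 4 := by nlinarith
  have hs2 : s ^ 2 = c ^ 2 - 4 := Real.sq_sqrt hD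
  have hsnn : 0 ≤ s := Real.sqrt_nonneg _
  have hslt : s < c := by nlinarith
  have hsgt : c - 2 < s := by nlinarith
  refine ⟨(-c + s) / 2, (-c - s) / 2, by linear_combination -hs2 / 4, by ring,
    by nlinarith, by nlinarith, by nlinarith, hdetS _ (by linear_combination hs2 / 4),
    hdetS _ (by linear_combination hs2 / 4), ?_⟩
  apply no_power_aux _ ((-c - s) / 2)
  · rw [abs_of_neg (by nlinarith)]; nlinarith
  · exact hdetS _ (by linear_combination hs2 / 4)

/-- For `1 ≤ n ≤ 4`, the dP_n Serre operator `S_n = χ_n⁻¹ χ_nᵀ` has two distinct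
negative real eigenvalues `λ₊, λ₋` with `λ₊ λ₋ = 1`, `λ₊ + λ₋ = -(7-n)`, and
`λ₋ < -1 < λ₊ < 0`; in particular no power of `S_n` equals `±I`. -/

theorem stmt12 (n : ℕ) (h1 : 1 ≤ n) (h4 : n ≤ 4) :
    let χ : Matrix (Fin (n + 2)) (Fin (n + 2)) ℝ :=
      Matrix.of fun i j =>
        if i = j then 1
        else if i.val < n ∧ (j.val = n ∨ j.val = n + 1) then -1
        else if i.val = n ∧ j.val = n + 1 then 3
        else 0
    let S := χ⁻¹ * χᵀ
    ∃ lp lm : ℝ, lp * lm = 1 ∧ lp + lm = -((7 : ℝ) - n) ∧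
      lm < -1 ∧ -1 < lp ∧ lp < 0 ∧
      (S - lp • 1).det = 0 ∧ (S - lm • 1).det = 0 ∧
      ∀ q : ℕ, 1 ≤ q → S ^ q ≠ 1 ∧ S ^ q ≠ -1 := by
  interval_cases n
  · intro χ S
    simp only [S]
    have hd : χ.det = 1 := by apply chi_det_one
    have hker : ∀ l : ℝ, l ^ 2 + 6 * l + 1 = 0 → (χᵀ - l • χ).det = 0 := by
      intro l hq
      apply Matrix.exists_mulVec_eq_zero_iff.1
      refine ⟨![1 + 2*l, -2 + 3*l, 7], ?_, ?_⟩
      · intro h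
        have := congrFun h 0
        simp at this
        nlinarith [hq, this]
      · funext i
        fin_cases i <;>
        · simp only [Matrix.mulVec, dotProduct, Fin.sum_univ_succ, Fin.sum_univ_zero,
            Matrix.sub_apply, Matrix.transpose_apply, Matrix.smul_apply, Matrix.of_apply,
            smul_eq_mul, χ]
          norm_num [Fin.ext_iff, Matrix.cons_val_two, Matrix.cons_val_succ']
          all_goals linarith [hq]
    obtain ⟨lp, lm, e1, e2, e3, e4, e5, e6, e7, e8⟩ := main_aux χ hd 6 (by norm_num) hker
    exact ⟨lp, lm, e1, by rw [e2]; norm_num, e3, e4, e5, e6, e7, e8⟩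
  · intro χ S
    simp only [S]
    have hd : χ.det = 1 := by apply chi_det_one
    have hker : ∀ l : ℝ, l ^ 2 + 5 * l + 1 = 0 → (χᵀ - l • χ).det = 0 := by
      intro l hq
      apply Matrix.exists_mulVec_eq_zero_iff.1
      refine ⟨![1 + 2*l, 1 + 2*l, -1 + 3*l, 5], ?_, ?_⟩
      · intro h
        have := congrFun h 0
        simp at this
        nlinarith [hq, this]
      · funext i
        fin_cases i <;>
        · simp only [Matrix.mulVec, dotProduct, Fin.sum_univ_succ, Fin.sum_univ_zero,
            Matrix.sub_apply, Matrix.transpose_apply, Matrix.smul_apply, Matrix.of_apply,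
            smul_eq_mul, χ]
          norm_num [Fin.ext_iff, Matrix.cons_val_two, Matrix.cons_val_succ']
          all_goals linarith [hq]
    obtain ⟨lp, lm, e1, e2, e3, e4, e5, e6, e7, e8⟩ := main_aux χ hd 5 (by norm_num) hker
    exact ⟨lp, lm, e1, by rw [e2]; norm_num, e3, e4, e5, e6, e7, e8⟩
  · intro χ S
    simp only [S]
    have hd : χ.det = 1 := by apply chi_det_one
    have hker : ∀ l : ℝ, l ^ 2 + 4 * l + 1 = 0 → (χᵀ - l • χ).det = 0 := by
      intro l hq
      apply Matrix.exists_mulVec_eq_zero_iff.1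
      refine ⟨![1 + 2*l, 1 + 2*l, 1 + 2*l, 3*l, 3], ?_, ?_⟩
      · intro h
        have := congrFun h 0
        simp at this
        nlinarith [hq, this]
      · funext i
        fin_cases i <;>
        · simp only [Matrix.mulVec, dotProduct, Fin.sum_univ_succ, Fin.sum_univ_zero,
            Matrix.sub_apply, Matrix.transpose_apply, Matrix.smul_apply, Matrix.of_apply,
            smul_eq_mul, χ]
          norm_num [Fin.ext_iff, Matrix.cons_val_two, Matrix.cons_val_succ']
          all_goals linarith [hq]
    obtain ⟨lp, lm, e1, e2, e3, e4, e5, e6, e7, e8⟩ := main_aux χ hd 4 (by norm_num) hker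
    exact ⟨lp, lm, e1, by rw [e2]; norm_num, e3, e4, e5, e6, e7, e8⟩
  · intro χ S
    simp only [S]
    have hd : χ.det = 1 := by apply chi_det_one
    have hker : ∀ l : ℝ, l ^ 2 + 3 * l + 1 = 0 → (χᵀ - l • χ).det = 0 := by
      intro l hq
      apply Matrix.exists_mulVec_eq_zero_iff.1
      refine ⟨![1 + 2*l, 1 + 2*l, 1 + 2*l, 1 + 2*l, 1 + 3*l, 1], ?_, ?_⟩
      · intro h
        have := congrFun h 0
        simp at this
        nlinarith [hq, this]
      · funext i
        fin_cases i <;>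
        · simp only [Matrix.mulVec, dotProduct, Fin.sum_univ_succ, Fin.sum_univ_zero,
            Matrix.sub_apply, Matrix.transpose_apply, Matrix.smul_apply, Matrix.of_apply,
            smul_eq_mul, χ]
          norm_num [Fin.ext_iff, Matrix.cons_val_two, Matrix.cons_val_succ']
          all_goals linarith [hq]
    obtain ⟨lp, lm, e1, e2, e3, e4, e5, e6, e7, e8⟩ := main_aux χ hd 3 (by norm_num) hker
    exact ⟨lp, lm, e1, by rw [e2]; norm_num, e3, e4, e5, e6, e7, e8⟩
end
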